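/- Every infinite word contains powers of every order or antipowers of every order. Precisely: for every infinite word w over an arbitrary (possibly infinite) alphabet, either for every integer k ≥ 1 the word w contains a factor that is a k-power, or for every integer k ≥ 1 the word w contains a factor that is a k-antipower. -/
import Mathlib


/-- `v` is a (finite) factor of the infinite word `w` : it occurs as a
contiguous block `w i, w (i+1), …` somewhere in `w`. -/
def IsFactor {A : Type*} (w : ℕ → A) (v : List A) : Prop :=
  ∃ i : ℕ, v = (List.range v.length).map (fun j => w (i + j))

/-- A `k`-power: a concatenation of `k` copies of a single nonempty word. -/
def IsPower {A : Type*} (k : ℕ) (v : List A) : Prop :=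
  ∃ u : List A, u ≠ [] ∧ v = (List.replicate k u).flatten

/-- A `k`-antipower: a concatenation of `k` pairwise distinct words of the same
positive length. -/
def IsAntipower {A : Type*} (k : ℕ) (v : List A) : Prop :=
  ∃ us : List (List A), us.length = k ∧ us.flatten = v ∧
    (∃ d : ℕ, 0 < d ∧ ∀ u ∈ us, u.length = d) ∧
    us.Pairwise (fun u₁ u₂ => u₁ ≠ u₂)

/-- Concatenating the `k` aligned blocks of length `n` gives the prefix of length `k*n`. -/
lemma flatten_blocks {A : Type*} (w : ℕ → A) (n : ℕ) : ∀ k : ℕ,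
    ((List.range k).map fun s => (List.range n).map fun δ => w (s * n + δ)).flatten
      = (List.range (k * n)).map fun δ => w δ := by
  intro k
  induction k with
  | zero => simp
  | succ k ih =>
    rw [List.range_succ, List.map_append, List.flatten_append, ih,
      show (k + 1) * n = k * n + n from by ring, List.range_add, List.map_append, List.map_map]
    simp

/-- If no `k`-antipower occurs in `w`, then among the first `k` aligned blocks of
length `n` two must coincide. -/
lemma exists_eq_blocks {A : Type*} (w : ℕ → A) (k : ℕ)
    (hk : ∀ v : List A, IsFactor w v → ¬ IsAntipower k v) (n : ℕ) (hn : 0 < n) :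
    ∃ i j : ℕ, i < j ∧ j < k ∧ ∀ δ, δ < n → w (i * n + δ) = w (j * n + δ) := by
  by_contra hcon
  push_neg at hcon
  apply hk ((List.range (k * n)).map fun δ => w δ)
  · exact ⟨0, by simp⟩
  · refine ⟨(List.range k).map fun s => (List.range n).map fun δ => w (s * n + δ),
      by simp, flatten_blocks w n k, ⟨n, hn, ?_⟩, ?_⟩
    · intro u hu
      simp only [List.mem_map, List.mem_range] at hu
      obtain ⟨s, -, rfl⟩ := hu
      simp
    · rw [List.pairwise_map]
      have hp : (List.range k).Pairwise (fun s s' => s < s' ∧ s' < k) := by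
        rw [List.pairwise_iff_get]
        intro i j hij
        have h2 : (j : ℕ) < k := by
          have := j.isLt; simpa using this
        simp only [List.get_eq_getElem, List.getElem_range]
        exact ⟨hij, h2⟩
      refine hp.imp ?_
      rintro s s' ⟨h1, h2⟩ heq
      obtain ⟨δ, hδn, hδne⟩ := hcon s s' h1 h2
      exact hδne (List.map_inj_left.mp heq δ (List.mem_range.mpr hδn))

/-- A periodic window of length `K*q` yields a `K`-power factor. -/
lemma pow_flatten_aux {A : Type*} (w : ℕ → A) (a q : ℕ) :
    ∀ M : ℕ, (∀ δ, δ + q < M * q → w (a + δ + q) = w (a + δ)) →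
    (List.replicate M ((List.range q).map fun δ => w (a + δ))).flatten
      = (List.range (M * q)).map fun δ => w (a + δ) := by
  intro M
  induction M with
  | zero => intro _; simp
  | succ M ih =>
    intro h
    have hle : M * q ≤ (M + 1) * q := Nat.mul_le_mul_right q (Nat.le_succ M)
    have h' : ∀ δ, δ + q < M * q → w (a + δ + q) = w (a + δ) :=
      fun δ hδ => h δ (lt_of_lt_of_le hδ hle)
    rw [List.replicate_succ, List.flatten_cons, ih h',
      show (M + 1) * q = q + M * q from by ring, List.range_add, List.map_append,
      List.map_map]
    congr 1
    refine (List.map_congr_left ?_).symm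
    intro δ hδ
    have hδ' : δ < M * q := List.mem_range.mp hδ
    have hδ'' : δ + q < (M + 1) * q := by
      have := Nat.add_lt_add_right hδ' q
      rwa [show (M + 1) * q = M * q + q from by ring]
    have := h δ hδ''
    simp only [Function.comp]
    rw [show a + (q + δ) = a + δ + q from by ring]
    exact this

lemma power_of_period {A : Type*} (w : ℕ → A) (a q K : ℕ) (hq : 0 < q)
    (hper : ∀ δ, δ + q < K * q → w (a + δ + q) = w (a + δ)) :
    ∃ v : List A, IsFactor w v ∧ IsPower K v := by
  refine ⟨(List.range (K * q)).map fun δ => w (a + δ), ⟨a, by simp⟩,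
    (List.range q).map fun δ => w (a + δ), ?_, (pow_flatten_aux w a q K hper).symm⟩
  intro h
  have := congrArg List.length h
  simp [hq.ne'] at this

/-- The key combination step: two coinciding-block facts at close lengths
`n₁ < n₂` with the same pair `(i,j)` produce a `K`-power. -/
lemma key_lemma {A : Type*} (w : ℕ → A) (K k i j n₁ n₂ : ℕ)
    (hij : i < j) (hjk : j < k) (hn : n₁ < n₂)
    (hbig : (K + 1) * (k * (k * k)) < n₁) (hclose : n₂ ≤ n₁ + k * k)
    (H1 : ∀ δ, δ < n₁ → w (i * n₁ + δ) = w (j * n₁ + δ))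
    (H2 : ∀ δ, δ < n₂ → w (i * n₂ + δ) = w (j * n₂ + δ)) :
    ∃ v : List A, IsFactor w v ∧ IsPower K v := by
  obtain ⟨e, he, he1⟩ : ∃ e, n₂ = n₁ + e ∧ 1 ≤ e := ⟨n₂ - n₁, by omega⟩
  obtain ⟨c, hc, hc1⟩ : ∃ c, j = i + c ∧ 1 ≤ c := ⟨j - i, by omega⟩
  have he2 : e ≤ k * k := by omega
  have hik : i ≤ k := by omega
  have hck : c ≤ k := by omega
  set q := c * e with hqd
  set a := j * n₁ + i * e with ha
  have hq : 0 < q := Nat.mul_pos hc1 he1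
  -- bounds
  have hqk : q ≤ k * (k * k) := Nat.mul_le_mul hck he2
  have hie : i * e ≤ k * (k * k) := Nat.mul_le_mul hik he2
  have hKq : K * q ≤ K * (k * (k * k)) := Nat.mul_le_mul le_rfl hqk
  have hexp : (K + 1) * (k * (k * k)) = K * (k * (k * k)) + k * (k * k) := by ring
  have hbound : K * q + i * e < n₁ := by
    calc K * q + i * e ≤ K * (k * (k * k)) + k * (k * k) := by
          exact Nat.add_le_add hKq hie
      _ = (K + 1) * (k * (k * k)) := hexp.symm
      _ < n₁ := hbig
  refine power_of_period w a q K hq ?_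
  intro δ hδ
  have hδq : δ < K * q := lt_of_le_of_lt (Nat.le_add_right δ q) hδ
  have hδ1 : i * e + δ < n₁ := by
    have : i * e + δ < i * e + K * q := Nat.add_lt_add_left hδq _
    omega
  have E1 := H1 (i * e + δ) hδ1
  have E2 := H2 δ (by omega)
  have r1 : i * n₁ + (i * e + δ) = i * n₂ + δ := by rw [he]; ring
  have r2 : j * n₁ + (i * e + δ) = a + δ := by rw [ha]; ring
  have r3 : j * n₂ + δ = a + δ + q := by rw [ha, hqd, he, hc]; ring
  rw [r1, r2] at E1
  rw [r3] at E2
  exact E2.symm.trans E1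

/-- Every infinite word (over an arbitrary alphabet) contains powers of every
order or antipowers of every order. -/
theorem every_infinite_word_powers_or_antipowers {A : Type*} (w : ℕ → A) :
    (∀ k : ℕ, 1 ≤ k → ∃ v : List A, IsFactor w v ∧ IsPower k v) ∨
    (∀ k : ℕ, 1 ≤ k → ∃ v : List A, IsFactor w v ∧ IsAntipower k v) := by
  by_cases hR : ∀ k : ℕ, 1 ≤ k → ∃ v : List A, IsFactor w v ∧ IsAntipower k v
  · exact Or.inr hR
  push_neg at hR
  obtain ⟨k, hk1, hk⟩ := hR
  left
  intro K hK
  have hch : ∀ m : ℕ, ∃ i j : ℕ, i < j ∧ j < k ∧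
      ∀ δ, δ < m + 1 → w (i * (m + 1) + δ) = w (j * (m + 1) + δ) :=
    fun m => exists_eq_blocks w k hk (m + 1) m.succ_pos
  choose I J hIJ hJk hEq using hch
  set n₀ := (K + 1) * (k * (k * k)) + 1 with hn₀
  have hcard : (Finset.range k ×ˢ Finset.range k).card < (Finset.Icc n₀ (n₀ + k * k)).card := by
    rw [Finset.card_product, Finset.card_range, Nat.card_Icc]
    omega
  have hmaps : ∀ m ∈ Finset.Icc n₀ (n₀ + k * k),
      (fun m => (I m, J m)) m ∈ Finset.range k ×ˢ Finset.range k := by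
    intro m _
    simp only [Finset.mem_product, Finset.mem_range]
    exact ⟨lt_trans (hIJ m) (hJk m), hJk m⟩
  obtain ⟨m₁, hm₁, m₂, hm₂, hne, hfe⟩ :=
    Finset.exists_ne_map_eq_of_card_lt_of_maps_to hcard hmaps
  rw [Finset.mem_Icc] at hm₁ hm₂
  have hI : I m₁ = I m₂ := congrArg Prod.fst hfe
  have hJ : J m₁ = J m₂ := congrArg Prod.snd hfe
  rcases Nat.lt_or_ge m₁ m₂ with hlt | hge
  · refine key_lemma w K k (I m₁) (J m₁) (m₁ + 1) (m₂ + 1) (hIJ m₁) (hJk m₁)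
      (by omega) (by omega) (by omega) (hEq m₁) ?_
    rw [hI, hJ]
    exact hEq m₂
  · have hlt : m₂ < m₁ := by omega
    refine key_lemma w K k (I m₂) (J m₂) (m₂ + 1) (m₁ + 1) (hIJ m₂) (hJk m₂)
      (by omega) (by omega) (by omega) (hEq m₂) ?_
    rw [← hI, ← hJ]
    exact hEq m₁
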